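/- Let h, p ∈ ℂ, I ≥ 0, σ² > 0, and define SNR = |h|²|p|²/(I + σ²) and E(u, w) = 1 + log(w) − w·(|1 − ū·h·p|² + |u|²·(I + σ²)) for u ∈ ℂ, w > 0. Then sup_{u ∈ ℂ, w > 0} E(u, w) = log(1 + SNR), and the supremum is attained at u* = h·p/(|h·p|² + I + σ²) and w* = 1 + SNR. -/

import Mathlib

/-- Scalar rate–MSE relationship: `sup_{u ∈ ℂ, w > 0} E(u, w) = log(1 + SNR)`,
attained at `u* = h p / (|h p|² + I + σ²)` and `w* = 1 + SNR`, where
`E(u, w) = 1 + log w − w (|1 − conj u · h · p|² + |u|²(I + σ²))`. -/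
theorem stmt_2 (h p : ℂ) (I σ2 : ℝ) (hI : 0 ≤ I) (hσ : 0 < σ2) :
    let SNR : ℝ := ‖h‖ ^ 2 * ‖p‖ ^ 2 / (I + σ2)
    let E : ℂ → ℝ → ℝ := fun u w =>
      1 + Real.log w -
        w * (‖1 - (starRingEnd ℂ) u * h * p‖ ^ 2
              + ‖u‖ ^ 2 * (I + σ2))
    let ustar : ℂ := h * p / ((‖h * p‖ ^ 2 + I + σ2 : ℝ) : ℂ)
    (∀ u : ℂ, ∀ w : ℝ, 0 < w → E u w ≤ Real.log (1 + SNR)) ∧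
    E ustar (1 + SNR) = Real.log (1 + SNR) := by
  intro SNR E ustar
  have hs0 : 0 < I + σ2 := by linarith
  set g : ℂ := h * p with hg
  set a : ℝ := Complex.normSq g with ha
  have ha0 : 0 ≤ a := Complex.normSq_nonneg g
  have hSNR : SNR = a / (I + σ2) := by
    simp only [SNR, ha, hg, ← Complex.sq_norm, map_mul, norm_mul, mul_pow]
  have h1SNR : 1 + SNR = (a + (I + σ2)) / (I + σ2) := by
    rw [hSNR]; field_simp; ring
  have h1SNRpos : 0 < 1 + SNR := by rw [h1SNR]; positivity
  -- coordinate expansion of M(u)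
  have hM : ∀ u : ℂ, ‖1 - (starRingEnd ℂ) u * h * p‖ ^ 2
      + ‖u‖ ^ 2 * (I + σ2)
      = (1 - (u.re * g.re + u.im * g.im))^2 + (u.re * g.im - u.im * g.re)^2
        + (u.re^2 + u.im^2) * (I + σ2) := by
    intro u
    have : (starRingEnd ℂ) u * h * p = (starRingEnd ℂ) u * g := by rw [hg]; ring
    rw [this, Complex.sq_norm, Complex.sq_norm, Complex.normSq_apply, Complex.normSq_apply]
    simp [Complex.mul_re, Complex.mul_im]
    ring
  have hag : a = g.re^2 + g.im^2 := by
    rw [ha, Complex.normSq_apply]; ring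
  -- lower bound on M
  have hMlb : ∀ u : ℂ, (I + σ2) / (a + (I + σ2)) ≤
      ‖1 - (starRingEnd ℂ) u * h * p‖ ^ 2
      + ‖u‖ ^ 2 * (I + σ2) := by
    intro u
    rw [hM u, div_le_iff₀ (by positivity)]
    have hid : (u.re*g.re+u.im*g.im)^2 + (u.re*g.im-u.im*g.re)^2
        = (u.re^2+u.im^2)*a := by rw [hag]; ring
    nlinarith [hid, hag, sq_nonneg ((a + (I + σ2)) * u.re - g.re),
      sq_nonneg ((a + (I + σ2)) * u.im - g.im)]
  constructor
  · intro u w hw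
    have hMpos : 0 < ‖1 - (starRingEnd ℂ) u * h * p‖ ^ 2
        + ‖u‖ ^ 2 * (I + σ2) :=
      lt_of_lt_of_le (by positivity) (hMlb u)
    set M := ‖1 - (starRingEnd ℂ) u * h * p‖ ^ 2
        + ‖u‖ ^ 2 * (I + σ2) with hMdef
    have hlog1 : Real.log (w * M) ≤ w * M - 1 :=
      Real.log_le_sub_one_of_pos (by positivity)
    rw [Real.log_mul (ne_of_gt hw) (ne_of_gt hMpos)] at hlog1
    have hlog2 : Real.log ((I + σ2) / (a + (I + σ2))) ≤ Real.log M :=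
      Real.log_le_log (by positivity) (hMlb u)
    have hinv : Real.log ((I + σ2) / (a + (I + σ2))) = - Real.log (1 + SNR) := by
      rw [h1SNR, ← Real.log_inv]
      congr 1
      field_simp
    simp only [E]
    rw [← hMdef]
    linarith [hinv ▸ hlog2]
  · -- equality at ustar
    have hMstar : ‖1 - (starRingEnd ℂ) ustar * h * p‖ ^ 2
        + ‖ustar‖ ^ 2 * (I + σ2) = (I + σ2) / (a + (I + σ2)) := by
      have hden : ‖h * p‖ ^ 2 + I + σ2 = a + (I + σ2) := by
        rw [Complex.sq_norm, ← hg, ← ha]; ring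
      have hcpos : (0:ℝ) < a + (I + σ2) := by positivity
      have hustar : ustar = g / (((a + (I + σ2)) : ℝ) : ℂ) := by
        show g / _ = _
        rw [hden]
      have hre : ustar.re = g.re / (a + (I + σ2)) := by
        rw [hustar, Complex.div_ofReal_re]
      have him : ustar.im = g.im / (a + (I + σ2)) := by
        rw [hustar, Complex.div_ofReal_im]
      rw [hM ustar, hre, him]
      rw [hag] at hcpos ⊢
      field_simp
      ring
    simp only [E]
    rw [hMstar, h1SNR]
    have : (a + (I + σ2)) / (I + σ2) * ((I + σ2) / (a + (I + σ2))) = 1 := by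
      field_simp
    rw [this]
    ring
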